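/- Let m and n be integers such that m is not a perfect square, n ≥ 2, and m < n. Then the Diophantine equation x² − (n² + 4)y² = 4m has no solution in integers, and likewise x² − (n² + 4)y² = −4m has no solution in integers. -/
import Mathlib

private lemma pell_descent (m n : ℤ) (hm : 0 < m) (hn : 2 ≤ n)
    (hsq : ¬ IsSquare m) (hlt : m < n) :
    ∀ k : ℕ, ∀ x y : ℤ, y.natAbs = k → 0 ≤ x → 0 ≤ y →
      (x ^ 2 - (n ^ 2 + 4) * y ^ 2 = 4 * m ∨
       x ^ 2 - (n ^ 2 + 4) * y ^ 2 = -(4 * m)) → False := by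
  intro k
  induction k using Nat.strong_induction_on with
  | _ k ih =>
  intro x y hk hx hy h
  by_cases hy0 : y = 0
  · subst hy0
    rcases h with h | h
    · have hx2 : x ^ 2 = 4 * m := by linear_combination h
      rcases Int.even_or_odd x with ⟨t, ht⟩ | ⟨t, ht⟩
      · exact hsq ⟨t, by nlinarith⟩
      · have h4 : 4 * (t ^ 2 + t) + 1 = 4 * m := by nlinarith
        omega
    · nlinarith
  · have hy1 : 1 ≤ y := by omega
    -- parity: x ≡ n*y (mod 2)
    have hE : Even (x ^ 2 - (n * y) ^ 2) := by
      rcases h with h | h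
      · exact ⟨2 * m + 2 * y ^ 2, by linear_combination h⟩
      · exact ⟨-(2 * m) + 2 * y ^ 2, by linear_combination h⟩
    have hE2 : Even (x - n * y) := by
      have h1 : Even (x ^ 2) ↔ Even ((n * y) ^ 2) := Int.even_sub.mp hE
      have h2 : Even x ↔ Even (n * y) := by
        constructor
        · intro hx'
          exact (Int.even_pow.mp (h1.mp (Int.even_pow.mpr ⟨hx', two_ne_zero⟩))).1
        · intro hy'
          exact (Int.even_pow.mp (h1.mpr (Int.even_pow.mpr ⟨hy', two_ne_zero⟩))).1
      exact Int.even_sub.mpr h2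
    obtain ⟨c, hc⟩ : ∃ c, x - n * y = 2 * c := by
      rcases hE2 with ⟨r, hr⟩; exact ⟨r, by linarith⟩
    obtain ⟨d, hd⟩ : ∃ d, n * x - (n ^ 2 + 4) * y = 2 * d :=
      ⟨n * c - 2 * y, by linear_combination n * hc⟩
    -- bounds: (n-2)*y < x < (n+2)*y
    have hysq : 1 ≤ y ^ 2 := by nlinarith
    have hub2 : x ^ 2 < (n * y + 2 * y) ^ 2 := by
      rcases h with h | h <;> nlinarith
    have hlb2 : (n * y - 2 * y) ^ 2 < x ^ 2 := by
      rcases h with h | h <;> nlinarith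
    have hub : x < n * y + 2 * y := by
      have h0 : (0:ℤ) ≤ n * y + 2 * y := by nlinarith
      exact lt_of_pow_lt_pow_left₀ 2 h0 hub2
    have hlb : n * y - 2 * y < x := by
      exact lt_of_pow_lt_pow_left₀ 2 hx hlb2
    have hcl : -y < c := by linarith
    have hcr : c < y := by linarith
    have hck : c.natAbs < k := by omega
    -- new equation
    have hnew : d ^ 2 - (n ^ 2 + 4) * c ^ 2 = -(x ^ 2 - (n ^ 2 + 4) * y ^ 2) := by
      have h4 : (2 * d) ^ 2 - (n ^ 2 + 4) * (2 * c) ^ 2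
          = (n * x - (n ^ 2 + 4) * y) ^ 2 - (n ^ 2 + 4) * (x - n * y) ^ 2 := by
        rw [← hd, ← hc]
      nlinarith [h4]
    have happ : |d| ^ 2 - (n ^ 2 + 4) * |c| ^ 2 = 4 * m ∨
        |d| ^ 2 - (n ^ 2 + 4) * |c| ^ 2 = -(4 * m) := by
      rcases h with h | h
      · right; rw [sq_abs, sq_abs, hnew, h]
      · left; rw [sq_abs, sq_abs, hnew, h]; ring
    exact ih c.natAbs hck |d| |c| (Int.natAbs_abs c) (abs_nonneg d) (abs_nonneg c) happ

/-- If `m` is a positive non-square integer with `n ≥ 2` and `m < n`, then the Diophantine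
equation `x² - (n² + 4)y² = ±4m` has no integer solutions. -/
theorem no_solution_pell_type_two (m n : ℤ) (hm : 0 < m) (hn : 2 ≤ n)
    (hsq : ¬ IsSquare m) (hlt : m < n) :
    (¬ ∃ x y : ℤ, x ^ 2 - (n ^ 2 + 4) * y ^ 2 = 4 * m) ∧
    (¬ ∃ x y : ℤ, x ^ 2 - (n ^ 2 + 4) * y ^ 2 = -(4 * m)) := by
  constructor
  · rintro ⟨x, y, hxy⟩
    exact pell_descent m n hm hn hsq hlt y.natAbs |x| |y| (Int.natAbs_abs y)
      (abs_nonneg x) (abs_nonneg y) (Or.inl (by simpa [sq_abs] using hxy))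
  · rintro ⟨x, y, hxy⟩
    exact pell_descent m n hm hn hsq hlt y.natAbs |x| |y| (Int.natAbs_abs y)
      (abs_nonneg x) (abs_nonneg y) (Or.inr (by simpa [sq_abs] using hxy))
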